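/- arXiv:math/0511284 — 2 statements merged into one kernel-verified Lean document; each statement's English description precedes it below -/
import Mathlib

section
/- Let T0 be a module over B[[t]] which is free of finite rank, equipped with a B-linear operator D satisfying D(t·v) = t·v + t·D(v) (i.e. D acts as t∂_t plus a B[[t]]-linear part), such that the induced endomorphism of T0/t·T0 is nilpotent. Then for every k ≥ 1 the map D : t^k·T0 → t^k·T0 is well-defined and the induced endomorphism of t^k·T0/t^{k+1}·T0 is invertible; in particular D - 0 restricted to t^k·T0/t^{k+1}·T0 is bijective. -/
/-- The operator `t∂ₜ` on `B[[t]]`. -/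
noncomputable def pTdt (B : Type*) [CommRing B] : PowerSeries B →ₗ[B] PowerSeries B where
  toFun f := PowerSeries.mk fun n => n • PowerSeries.coeff n f
  map_add' f g := by
    ext n
    simp [smul_add]
  map_smul' b f := by
    ext n
    simp only [PowerSeries.coeff_mk, map_smul, RingHom.id_apply, smul_eq_mul, nsmul_eq_mul]
    ring

/-- The submodule `t^k·T₀` of the free module `T₀ = B[[t]]^r`. -/
noncomputable def latticePow (B : Type*) [CommRing B] (r k : ℕ) :
    Submodule (PowerSeries B) (Fin r → PowerSeries B) :=
  (Ideal.span {(PowerSeries.X : PowerSeries B)}) ^ k • ⊤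

lemma mem_latticePow_iff {B : Type*} [CommRing B] {r k : ℕ} {v : Fin r → PowerSeries B} :
    v ∈ latticePow B r k ↔ ∃ w, v = (PowerSeries.X : PowerSeries B) ^ k • w := by
  unfold latticePow
  rw [Ideal.span_singleton_pow, Submodule.ideal_span_singleton_smul]
  constructor
  · rintro h
    obtain ⟨w, -, rfl⟩ := Submodule.mem_map.mp h
    exact ⟨w, rfl⟩
  · rintro ⟨w, rfl⟩
    exact Submodule.smul_mem_pointwise_smul w _ ⊤ trivial

lemma pTdt_X_pow {B : Type*} [CommRing B] (k : ℕ) :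
    pTdt B ((PowerSeries.X : PowerSeries B) ^ k)
      = (k : ℕ) • (PowerSeries.X : PowerSeries B) ^ k := by
  ext n
  simp only [pTdt, LinearMap.coe_mk, AddHom.coe_mk, PowerSeries.coeff_mk, map_nsmul,
    PowerSeries.coeff_X_pow]
  by_cases h : n = k <;> simp [h]

/-- Let `T₀` be a free module of finite rank over `B[[t]]` (`B` a
commutative `ℚ`-algebra), equipped with a `B`-linear operator `D` satisfying
`D(f·v) = (t∂ₜf)·v + f·D(v)` (in particular `D(t·v) = t·v + t·D(v)`), whose induced
endomorphism of `T₀/t·T₀` is nilpotent.  Then for every `k ≥ 1` the operator `D` maps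
`t^k·T₀` to itself, it also maps `t^{k+1}·T₀` to itself, and the induced endomorphism of
`t^k·T₀ / t^{k+1}·T₀` is invertible (bijective). -/
theorem tdt_on_graded_pieces_bijective
    (B : Type*) [CommRing B] [Algebra ℚ B] (r : ℕ)
    (D : (Fin r → PowerSeries B) →ₗ[B] (Fin r → PowerSeries B))
    (hLeib : ∀ (f : PowerSeries B) (v : Fin r → PowerSeries B),
      D (f • v) = (pTdt B f) • v + f • D v)
    (hnil : ∃ m : ℕ, ∀ v : Fin r → PowerSeries B,
      ((D ^ m : Module.End B (Fin r → PowerSeries B)) v) ∈ latticePow B r 1)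
    (k : ℕ) (hk : 1 ≤ k) :
    ∃ h1 : ∀ v ∈ (latticePow B r k).restrictScalars B,
        D v ∈ (latticePow B r k).restrictScalars B,
      ∃ h3 : ((latticePow B r (k + 1)).restrictScalars B).comap
            ((latticePow B r k).restrictScalars B).subtype ≤
          (((latticePow B r (k + 1)).restrictScalars B).comap
            ((latticePow B r k).restrictScalars B).subtype).comap (D.restrict h1),
      Function.Bijective (Submodule.mapQ _ _ (D.restrict h1) h3) := by
  obtain ⟨m, hm⟩ := hnil
  have hD : ∀ (j : ℕ) (u : Fin r → PowerSeries B),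
      D ((PowerSeries.X : PowerSeries B) ^ j • u)
        = j • ((PowerSeries.X : PowerSeries B) ^ j • u)
          + (PowerSeries.X : PowerSeries B) ^ j • D u := by
    intro j u
    rw [hLeib, pTdt_X_pow, smul_assoc]
  have hmem : ∀ (j : ℕ) (v : Fin r → PowerSeries B),
      v ∈ latticePow B r j → D v ∈ latticePow B r j := by
    intro j v hv
    obtain ⟨w, rfl⟩ := mem_latticePow_iff.mp hv
    rw [hD]
    exact Submodule.add_mem _ (nsmul_mem (mem_latticePow_iff.mpr ⟨w, rfl⟩) j)
      (mem_latticePow_iff.mpr ⟨D w, rfl⟩)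
  have h1 : ∀ v ∈ (latticePow B r k).restrictScalars B,
      D v ∈ (latticePow B r k).restrictScalars B := fun v hv => hmem k v hv
  have h3 : ((latticePow B r (k + 1)).restrictScalars B).comap
        ((latticePow B r k).restrictScalars B).subtype ≤
      (((latticePow B r (k + 1)).restrictScalars B).comap
        ((latticePow B r k).restrictScalars B).subtype).comap (D.restrict h1) := by
    intro x hx
    simp only [Submodule.mem_comap, Submodule.coe_subtype, Submodule.restrictScalars_mem] at hx ⊢
    rw [LinearMap.restrict_coe_apply]
    exact hmem (k + 1) _ hx
  refine ⟨h1, h3, ?_⟩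
  set p := (latticePow B r k).restrictScalars B with hp
  set p' := ((latticePow B r (k + 1)).restrictScalars B).comap p.subtype with hp'
  set φ := Submodule.mapQ p' p' (D.restrict h1) h3 with hφ
  rw [← Module.End.isUnit_iff]
  set c : Module.End B (p ⧸ p') := (k : Module.End B (p ⧸ p')) with hc
  have hcu : IsUnit c := by
    have hρ : IsUnit ((k : ℚ)) := by
      have : (k : ℚ) ≠ 0 := by exact_mod_cast Nat.one_le_iff_ne_zero.mp hk
      exact isUnit_iff_ne_zero.mpr this
    have := hρ.map ((algebraMap B (Module.End B (p ⧸ p'))).comp (algebraMap ℚ B))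
    rwa [map_natCast] at this
  -- membership helper
  have memk : ∀ u : Fin r → PowerSeries B,
      (PowerSeries.X : PowerSeries B) ^ k • u ∈ p :=
    fun u => mem_latticePow_iff.mpr ⟨u, rfl⟩
  set q : (Fin r → PowerSeries B) → (p ⧸ p') :=
    fun u => Submodule.Quotient.mk ⟨(PowerSeries.X : PowerSeries B) ^ k • u, memk u⟩ with hq
  have claim1 : ∀ u, (φ - c) (q u) = q (D u) := by
    intro u
    have h1' : (φ - c) (q u) = φ (q u) - c (q u) := rfl
    rw [h1', hq]
    rw [Submodule.mapQ_apply]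
    rw [Module.End.natCast_apply]
    show p'.mkQ _ - k • p'.mkQ _ = p'.mkQ _
    rw [← map_nsmul, ← map_sub]
    congr 1
    apply Subtype.ext
    show D ((PowerSeries.X : PowerSeries B) ^ k • u)
        - k • ((PowerSeries.X : PowerSeries B) ^ k • u)
        = (PowerSeries.X : PowerSeries B) ^ k • D u
    rw [hD]
    abel
  have claim2 : ∀ (j : ℕ) (u), ((φ - c) ^ j) (q u) = q ((D ^ j) u) := by
    intro j
    induction j with
    | zero => intro u; simp
    | succ j ih =>
      intro u
      rw [pow_succ', Module.End.mul_apply, ih, claim1, pow_succ', Module.End.mul_apply]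
  have hnilp : IsNilpotent (φ - c) := by
    refine ⟨m, ?_⟩
    refine LinearMap.ext fun x => ?_
    obtain ⟨⟨v, hv⟩, rfl⟩ := Submodule.Quotient.mk_surjective p' x
    obtain ⟨w, hw⟩ := mem_latticePow_iff.mp hv
    have hx : (Submodule.Quotient.mk ⟨v, hv⟩ : p ⧸ p') = q w := by
      subst hw; rfl
    rw [LinearMap.zero_apply, hx, claim2 m w]
    rw [hq, Submodule.Quotient.mk_eq_zero]
    have hmm : (PowerSeries.X : PowerSeries B) ^ k • ((D ^ m) w)
        ∈ latticePow B r (k + 1) := by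
      obtain ⟨u, hu⟩ := mem_latticePow_iff.mp (hm w)
      rw [hu, pow_one, smul_smul, ← pow_succ]
      exact mem_latticePow_iff.mpr ⟨u, rfl⟩
    simpa [hp', Submodule.mem_comap] using hmm
  have : φ = c + (φ - c) := by abel
  rw [this]
  exact hnilp.isUnit_add_left_of_commute hcu ((Nat.cast_commute k _).symm)
end

section
/- Let C be a symmetric monoidal category, M an object of a module category over C, and suppose for each object V of C we are given a morphism s_V : F(V) ⊗ M → V ⋆ M (where F is a monoidal functor and ⋆ the module action), compatible with tensor products in the sense that the three natural composites agree (associativity of s with respect to V ⊗ W). If C is rigid (every object V has a dual V* with evaluation and coevaluation), then each s_V is an isomorphism. -/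
open CategoryTheory

attribute [local instance] CategoryTheory.endofunctorMonoidalCategory

section Aux
open MonoidalCategory Functor.LaxMonoidal Functor.OplaxMonoidal

variable {C E : Type*} [Category C] [Category E] [MonoidalCategory C] [MonoidalCategory E]

lemma my_zig (G : C ⥤ E) [G.Monoidal] (X Y : C) [ExactPairing X Y] :
    ((ε G ≫ G.map (η_ X Y) ≫ δ G X Y) ▷ G.obj X) ≫ (α_ _ _ _).hom ≫
      (G.obj X ◁ (μ G Y X ≫ G.map (ε_ X Y) ≫ η G)) =
      (λ_ (G.obj X)).hom ≫ (ρ_ (G.obj X)).inv := by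
  have h := congrArg G.map (ExactPairing.evaluation_coevaluation X Y)
  simp only [Functor.map_comp, Functor.Monoidal.map_whiskerRight,
    Functor.Monoidal.map_whiskerLeft, Functor.Monoidal.map_associator,
    Functor.Monoidal.map_leftUnitor, Functor.Monoidal.map_rightUnitor_inv,
    Category.assoc, Functor.Monoidal.μ_δ_assoc] at h
  have h' : G.map (η_ X Y) ▷ G.obj X ≫ δ G X Y ▷ G.obj X ≫
      (α_ (G.obj X) (G.obj Y) (G.obj X)).hom ≫ G.obj X ◁ μ G Y X ≫
      G.obj X ◁ G.map (ε_ X Y) =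
      η G ▷ G.obj X ≫ (λ_ (G.obj X)).hom ≫ (ρ_ (G.obj X)).inv ≫ G.obj X ◁ ε G := by
    rw [← cancel_epi (δ G (𝟙_ C) X), ← cancel_mono (μ G X (𝟙_ C))]
    simpa [Category.assoc] using h
  calc ((ε G ≫ G.map (η_ X Y) ≫ δ G X Y) ▷ G.obj X) ≫ (α_ _ _ _).hom ≫
      (G.obj X ◁ (μ G Y X ≫ G.map (ε_ X Y) ≫ η G))
      = ε G ▷ G.obj X ≫ (G.map (η_ X Y) ▷ G.obj X ≫ δ G X Y ▷ G.obj X ≫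
        (α_ (G.obj X) (G.obj Y) (G.obj X)).hom ≫ G.obj X ◁ μ G Y X ≫
        G.obj X ◁ G.map (ε_ X Y)) ≫ G.obj X ◁ η G := by
        simp [comp_whiskerRight, MonoidalCategory.whiskerLeft_comp]
    _ = ε G ▷ G.obj X ≫ (η G ▷ G.obj X ≫ (λ_ (G.obj X)).hom ≫ (ρ_ (G.obj X)).inv ≫
        G.obj X ◁ ε G) ≫ G.obj X ◁ η G := by rw [h']
    _ = (λ_ (G.obj X)).hom ≫ (ρ_ (G.obj X)).inv := by
        simp [Functor.Monoidal.whiskerRight_ε_η_assoc]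

lemma my_aux (F G : C ⥤ E) [F.Monoidal] [G.Monoidal]
    (s : F ⟶ G) [NatTrans.IsMonoidal s] (V : C) [HasRightDual V] :
    IsIso (s.app V) := by
  set W := Vᘁ with hW
  have hδ : s.app (V ⊗ W) ≫ δ G V W = δ F V W ≫ (s.app V ⊗ₘ s.app W) := by
    rw [← cancel_epi (μ F V W), NatTrans.IsMonoidal.tensor_assoc,
      Functor.Monoidal.μ_δ, Category.comp_id, Functor.Monoidal.μ_δ_assoc]
  have hη : s.app (𝟙_ C) ≫ η G = η F := by
    rw [← cancel_epi (ε F), NatTrans.IsMonoidal.unit_assoc,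
      Functor.Monoidal.ε_η, Functor.Monoidal.ε_η]
  set b : G.obj W ⊗ G.obj V ⟶ 𝟙_ E := μ G W V ≫ G.map (ε_ V W) ≫ η G with hb
  set a : 𝟙_ E ⟶ F.obj V ⊗ G.obj W :=
    ε F ≫ F.map (η_ V W) ≫ δ F V W ≫ (F.obj V ◁ s.app W) with ha
  set t : G.obj V ⟶ F.obj V :=
    (λ_ (G.obj V)).inv ≫ (a ▷ G.obj V) ≫ (α_ _ _ _).hom ≫
      (F.obj V ◁ b) ≫ (ρ_ (F.obj V)).hom with ht
  have inner1 : (s.app W ▷ F.obj V) ≫ (G.obj W ◁ s.app V) ≫ b =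
      μ F W V ≫ F.map (ε_ V W) ≫ η F := by
    rw [hb, ← tensorHom_def_assoc, ← NatTrans.IsMonoidal.tensor_assoc,
      ← s.naturality_assoc, hη]
  have inner2 : a ≫ (s.app V ▷ G.obj W) = ε G ≫ G.map (η_ V W) ≫ δ G V W := by
    rw [ha]
    simp only [Category.assoc]
    rw [← tensorHom_def', ← hδ, s.naturality_assoc,
      NatTrans.IsMonoidal.unit_assoc]
  have eq1 : s.app V ≫ t = 𝟙 (F.obj V) := by
    calc s.app V ≫ t
        = (λ_ (F.obj V)).inv ≫ (𝟙_ E ◁ s.app V) ≫ (a ▷ G.obj V) ≫ (α_ _ _ _).hom ≫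
          (F.obj V ◁ b) ≫ (ρ_ (F.obj V)).hom := by
          rw [ht, leftUnitor_inv_naturality_assoc]
      _ = (λ_ (F.obj V)).inv ≫ (a ▷ F.obj V) ≫ ((F.obj V ⊗ G.obj W) ◁ s.app V) ≫
          (α_ _ _ _).hom ≫ (F.obj V ◁ b) ≫ (ρ_ (F.obj V)).hom := by
          rw [whisker_exchange_assoc]
      _ = (λ_ (F.obj V)).inv ≫
          (((ε F ≫ F.map (η_ V W) ≫ δ F V W) ▷ F.obj V) ≫ ((F.obj V ◁ s.app W) ▷ F.obj V)) ≫
          (α_ _ _ _).hom ≫ (F.obj V ◁ (G.obj W ◁ s.app V)) ≫ (F.obj V ◁ b) ≫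
          (ρ_ (F.obj V)).hom := by
          rw [associator_naturality_right_assoc, ha]
          simp only [comp_whiskerRight, Category.assoc]
      _ = (λ_ (F.obj V)).inv ≫ ((ε F ≫ F.map (η_ V W) ≫ δ F V W) ▷ F.obj V) ≫
          (α_ _ _ _).hom ≫
          (F.obj V ◁ ((s.app W ▷ F.obj V) ≫ (G.obj W ◁ s.app V) ≫ b)) ≫
          (ρ_ (F.obj V)).hom := by
          simp only [Category.assoc, associator_naturality_middle_assoc,
            MonoidalCategory.whiskerLeft_comp]
      _ = (λ_ (F.obj V)).inv ≫ ((ε F ≫ F.map (η_ V W) ≫ δ F V W) ▷ F.obj V) ≫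
          (α_ _ _ _).hom ≫
          (F.obj V ◁ (μ F W V ≫ F.map (ε_ V W) ≫ η F)) ≫ (ρ_ (F.obj V)).hom := by
          rw [inner1]
      _ = 𝟙 (F.obj V) := by
          rw [reassoc_of% (my_zig F V W)]
          simp
  have eq2 : t ≫ s.app V = 𝟙 (G.obj V) := by
    calc t ≫ s.app V
        = (λ_ (G.obj V)).inv ≫ (a ▷ G.obj V) ≫ (α_ _ _ _).hom ≫
          (F.obj V ◁ b) ≫ (s.app V ▷ 𝟙_ E) ≫ (ρ_ (G.obj V)).hom := by
          rw [ht]; simp only [Category.assoc, rightUnitor_naturality]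
      _ = (λ_ (G.obj V)).inv ≫ (a ▷ G.obj V) ≫ (α_ _ _ _).hom ≫
          (s.app V ▷ (G.obj W ⊗ G.obj V)) ≫ (G.obj V ◁ b) ≫ (ρ_ (G.obj V)).hom := by
          rw [← whisker_exchange_assoc]
      _ = (λ_ (G.obj V)).inv ≫ ((a ≫ (s.app V ▷ G.obj W)) ▷ G.obj V) ≫ (α_ _ _ _).hom ≫
          (G.obj V ◁ b) ≫ (ρ_ (G.obj V)).hom := by
          rw [← associator_naturality_left_assoc, ← comp_whiskerRight_assoc]
      _ = 𝟙 (G.obj V) := by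
          rw [inner2, hb]
          rw [reassoc_of% (my_zig G V W)]
          simp
  exact ⟨t, eq1, eq2⟩

end Aux


/-- Let `C` be a rigid (symmetric) monoidal category acting on a category
`D` (an action of `C` on `D` is a monoidal functor from `C` to the monoidal category of
endofunctors of `D`).  Suppose `F, G : C ⥤ (D ⥤ D)` are two such actions (e.g.
`V ↦ F(V) ⊗ (−)` and `V ↦ V ⋆ (−)`), and `s : F ⟶ G` is a natural transformation
compatible with the monoidal structures (so that the composites built from `s_V`, `s_W`
and `s_{V⊗W}` agree).  Then each component `s_V` (evaluated at any object `M` of `D`)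
is an isomorphism. -/
theorem monoidal_nat_trans_from_rigid_is_iso
    {C D : Type*} [Category C] [Category D]
    [MonoidalCategory C] [RigidCategory C]
    (F G : C ⥤ (D ⥤ D)) [F.Monoidal] [G.Monoidal]
    (s : F ⟶ G) [NatTrans.IsMonoidal s]
    (V : C) (M : D) :
    IsIso ((s.app V).app M) := by
  have : IsIso (s.app V) := my_aux F G s V
  infer_instance
end
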